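/- arXiv:2404.00174 — 2 statements merged into one kernel-verified Lean document; each statement's English description precedes it below -/
import Mathlib

section
/- Let M be a separable complete metric space such that every countable complete metric space is Lipschitz-equivalent to a subspace of M (i.e., admits a bi-Lipschitz embedding into M). Then M is not purely 1-unrectifiable; that is, M contains a bi-Lipschitz copy of a compact subset of ℝ of positive Lebesgue measure. -/
open Metric Set Pointwise

noncomputable section

namespace P13

/-- longest common prefix of two lists -/
def lcp : List ℕ → List ℕ → List ℕ
  | a :: as, b :: bs => if a = b then a :: lcp as bs else []
  | _, _ => []

@[simp] lemma lcp_nil_left (l : List ℕ) : lcp [] l = [] := by cases l <;> rfl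
@[simp] lemma lcp_nil_right (l : List ℕ) : lcp l [] = [] := by cases l <;> rfl

lemma lcp_self (l : List ℕ) : lcp l l = l := by
  induction l with
  | nil => rfl
  | cons a as ih => simp [lcp, ih]

lemma lcp_comm (s u : List ℕ) : lcp s u = lcp u s := by
  induction s generalizing u with
  | nil => simp
  | cons a as ih =>
    cases u with
    | nil => simp
    | cons b bs =>
      by_cases h : a = b
      · subst h; simp [lcp, ih]
      · simp [lcp, h, Ne.symm h]

lemma lcp_prefix_left (s u : List ℕ) : lcp s u <+: s := by
  induction s generalizing u with
  | nil => simp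
  | cons a as ih =>
    cases u with
    | nil => simp
    | cons b bs =>
      by_cases h : a = b
      · simpa [lcp, h] using (ih bs)
      · simp [lcp, h]

lemma lcp_prefix_right (s u : List ℕ) : lcp s u <+: u := by
  rw [lcp_comm]; exact lcp_prefix_left u s

lemma prefix_lcp {l s u : List ℕ} (hs : l <+: s) (hu : l <+: u) : l <+: lcp s u := by
  induction l generalizing s u with
  | nil => simp
  | cons a as ih =>
    rcases s with _ | ⟨b, bs⟩
    · simpa using hs
    rcases u with _ | ⟨c, cs⟩
    · simpa using hu
    rw [List.cons_prefix_cons] at hs hu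
    obtain ⟨rfl, hs⟩ := hs
    obtain ⟨rfl, hu⟩ := hu
    simpa [lcp] using ih hs hu

lemma lcp_eq_left {s u : List ℕ} (h : s <+: u) : lcp s u = s := by
  have h1 := lcp_prefix_left s u
  have h2 := prefix_lcp (List.prefix_refl s) h
  exact h1.eq_of_length (le_antisymm h1.length_le h2.length_le)

/-- `w n = 2⁻¹ ^ n` -/
def w (n : ℕ) : ℝ := (2:ℝ)⁻¹ ^ n

lemma w_pos (n : ℕ) : 0 < w n := pow_pos (by norm_num) n

lemma w_antitone : Antitone w := fun m n h => pow_le_pow_of_le_one (by norm_num) (by norm_num) h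

lemma w_strict : StrictAnti w := fun m n h =>
  pow_lt_pow_right_of_lt_one₀ (by norm_num) (by norm_num) h

lemma w_succ (n : ℕ) : w (n + 1) = w n / 2 := by
  simp [w, pow_succ]; ring

/-- tree-path part of the distance -/
def rho (s u : List ℕ) : ℝ := 2 * w (lcp s u).length - w s.length - w u.length

lemma rho_self (s : List ℕ) : rho s s = 0 := by simp [rho, lcp_self]; ring

lemma rho_comm (s u : List ℕ) : rho s u = rho u s := by
  simp [rho, lcp_comm s u]; ring

lemma rho_nonneg (s u : List ℕ) : 0 ≤ rho s u := by
  have h1 : w s.length ≤ w (lcp s u).length := w_antitone (lcp_prefix_left s u).length_le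
  have h2 : w u.length ≤ w (lcp s u).length := w_antitone (lcp_prefix_right s u).length_le
  simp only [rho]; linarith

lemma rho_eq_of_prefix {s u : List ℕ} (h : s <+: u) : rho s u = w s.length - w u.length := by
  simp [rho, lcp_eq_left h]; ring

lemma eq_of_rho_eq_zero {s u : List ℕ} (h : rho s u = 0) : s = u := by
  have h1 : w s.length ≤ w (lcp s u).length := w_antitone (lcp_prefix_left s u).length_le
  have h2 : w u.length ≤ w (lcp s u).length := w_antitone (lcp_prefix_right s u).length_le
  have hs : w s.length = w (lcp s u).length := by simp only [rho] at h; linarith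
  have hu : w u.length = w (lcp s u).length := by simp only [rho] at h; linarith
  have hsl : s.length = (lcp s u).length := w_strict.injective hs
  have hul : u.length = (lcp s u).length := w_strict.injective hu
  have h3 : lcp s u = s := ((lcp_prefix_left s u).eq_of_length hsl.symm)
  have h4 : lcp s u = u := ((lcp_prefix_right s u).eq_of_length hul.symm)
  rw [← h3, h4]

lemma rho_triangle (s u v : List ℕ) : rho s v ≤ rho s u + rho u v := by
  -- key: w (lcp s u).length + w (lcp u v).length ≥ w (lcp s v).length + w u.length
  have key : w (lcp s v).length + w u.length ≤ w (lcp s u).length + w (lcp u v).length := by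
    rcases List.prefix_or_prefix_of_prefix (lcp_prefix_right s u) (lcp_prefix_left u v) with h | h
    · -- lcp s u <+: lcp u v
      have h1 : lcp s u <+: lcp s v :=
        prefix_lcp (lcp_prefix_left s u) (h.trans (lcp_prefix_right u v))
      have h2 : w (lcp s v).length ≤ w (lcp s u).length := w_antitone h1.length_le
      have h3 : w u.length ≤ w (lcp u v).length := w_antitone (lcp_prefix_left u v).length_le
      linarith
    · -- lcp u v <+: lcp s u
      have h1 : lcp u v <+: lcp s v :=
        prefix_lcp (h.trans (lcp_prefix_left s u)) (lcp_prefix_right u v)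
      have h2 : w (lcp s v).length ≤ w (lcp u v).length := w_antitone h1.length_le
      have h3 : w u.length ≤ w (lcp s u).length := w_antitone (lcp_prefix_right s u).length_le
      linarith
  simp only [rho]; linarith

/-- dyadic value `i / 2^m` -/
def av (m i : ℕ) : ℝ := i * w m

/-- the point set of the space `X t` -/
def X (t : Set (List ℕ)) : Type := {p : List ℕ × ℕ // p.1 ∈ t ∧ p.2 ≤ 2 ^ p.1.length}

instance (t : Set (List ℕ)) : Countable (X t) := by
  unfold X; infer_instance

def xdist {t : Set (List ℕ)} (p q : X t) : ℝ :=
  |av p.1.1.length p.1.2 - av q.1.1.length q.1.2| + rho p.1.1 q.1.1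

instance XMetric (t : Set (List ℕ)) : MetricSpace (X t) where
  dist := xdist
  dist_self p := by simp [xdist, rho_self]
  dist_comm p q := by simp [xdist, abs_sub_comm, rho_comm p.1.1 q.1.1]
  dist_triangle p q r := by
    have h1 := abs_sub_abs_le_abs_sub (av p.1.1.length p.1.2) (av q.1.1.length q.1.2)
    have := abs_sub (av p.1.1.length p.1.2) (av r.1.1.length r.1.2)
    have h2 : |av p.1.1.length p.1.2 - av r.1.1.length r.1.2| ≤
        |av p.1.1.length p.1.2 - av q.1.1.length q.1.2| +
        |av q.1.1.length q.1.2 - av r.1.1.length r.1.2| := abs_sub_le _ _ _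
    have h3 := rho_triangle p.1.1 q.1.1 r.1.1
    simp only [xdist]; linarith
  eq_of_dist_eq_zero := by
    rintro ⟨⟨s, i⟩, hp⟩ ⟨⟨u, j⟩, hq⟩ h
    simp only [xdist] at h
    have h1 : 0 ≤ |av s.length i - av u.length j| := abs_nonneg _
    have h2 := rho_nonneg s u
    have hr : rho s u = 0 := by linarith
    have ha : |av s.length i - av u.length j| = 0 := by linarith
    have hsu : s = u := eq_of_rho_eq_zero hr
    subst hsu
    have : av s.length i = av s.length j := by rwa [abs_eq_zero, sub_eq_zero] at ha
    have hij : i = j := by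
      have hw := w_pos s.length
      have hij' : (i:ℝ) = j := by
        have := mul_right_cancel₀ hw.ne' this
        exact_mod_cast this
      exact_mod_cast hij'
    subst hij; rfl

/-- prefix-closed set of lists -/
def IsTree (t : Set (List ℕ)) : Prop := ∀ l ∈ t, ∀ l' : List ℕ, l' <+: l → l' ∈ t

/-- existence of an infinite branch -/
def Ill (t : Set (List ℕ)) : Prop :=
  ∃ c : ℕ → List ℕ, (∀ n, c n ∈ t) ∧ ∀ n, c n <+: c (n + 1) ∧ c n ≠ c (n + 1)

lemma rho_lower {s u : List ℕ} (h : s ≠ u) : w ((lcp s u).length + 1) ≤ rho s u := by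
  have hls : w s.length ≤ w (lcp s u).length := w_antitone (lcp_prefix_left s u).length_le
  have hlu : w u.length ≤ w (lcp s u).length := w_antitone (lcp_prefix_right s u).length_le
  have hw := w_succ (lcp s u).length
  have : lcp s u ≠ s ∨ lcp s u ≠ u := by
    by_contra hc
    push_neg at hc
    exact h (hc.1.symm.trans hc.2)
  rcases this with hne | hne
  · have hlt : (lcp s u).length < s.length :=
      lt_of_le_of_ne (lcp_prefix_left s u).length_le
        (fun he => hne ((lcp_prefix_left s u).eq_of_length he))
    have : w s.length ≤ w ((lcp s u).length + 1) := w_antitone hlt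
    simp only [rho]; linarith
  · have hlt : (lcp s u).length < u.length :=
      lt_of_le_of_ne (lcp_prefix_right s u).length_le
        (fun he => hne ((lcp_prefix_right s u).eq_of_length he))
    have : w u.length ≤ w ((lcp s u).length + 1) := w_antitone hlt
    simp only [rho]; linarith

lemma take_eq_take_of_lcp {a b : List ℕ} {j : ℕ} (h : j ≤ (lcp a b).length) :
    a.take j = b.take j := by
  have h1 : (lcp a b).take j <+: a.take j := (lcp_prefix_left a b).take j
  have h2 : (lcp a b).take j <+: b.take j := (lcp_prefix_right a b).take j
  have l1 : ((lcp a b).take j).length = j := by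
    simp [List.length_take, min_eq_left h]
  have la : (a.take j).length = j := by
    simp [List.length_take,
      min_eq_left (h.trans (lcp_prefix_left a b).length_le)]
  have lb : (b.take j).length = j := by
    simp [List.length_take,
      min_eq_left (h.trans (lcp_prefix_right a b).length_le)]
  have ea : (lcp a b).take j = a.take j := h1.eq_of_length (l1.trans la.symm)
  have eb : (lcp a b).take j = b.take j := h2.eq_of_length (l1.trans lb.symm)
  rw [← ea, eb]

theorem X_complete (t : Set (List ℕ)) (ht : IsTree t) (hwf : ¬ Ill t) :
    CompleteSpace (X t) := by
  apply Metric.complete_of_cauchySeq_tendsto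
  intro p hp
  set s : ℕ → List ℕ := fun k => (p k).1.1 with hs
  set iv : ℕ → ℕ := fun k => (p k).1.2 with hiv
  -- dist lower bounds
  have hdist : ∀ k l, rho (s k) (s l) ≤ dist (p k) (p l) := by
    intro k l
    have : dist (p k) (p l) = xdist (p k) (p l) := rfl
    rw [this]
    unfold xdist
    have := abs_nonneg (av (s k).length (iv k) - av (s l).length (iv l))
    simp only [← hs, ← hiv] at *
    linarith
  -- Cauchy gives N
  rw [Metric.cauchySeq_iff] at hp
  -- Step: s is eventually constant
  have hsev : ∃ N₀, ∀ k, N₀ ≤ k → s k = s N₀ := by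
    by_contra hnc
    push_neg at hnc
    -- choose Cauchy thresholds
    have hN : ∀ j : ℕ, ∃ N, ∀ k, N ≤ k → ∀ l, N ≤ l → dist (p k) (p l) < w (j + 1) := by
      intro j
      obtain ⟨N, hN⟩ := hp (w (j + 1)) (w_pos _)
      exact ⟨N, fun k hk l hl => hN k hk l hl⟩
    choose N hNs using hN
    -- monotone version
    let Nm : ℕ → ℕ := fun j => Nat.rec (N 0) (fun j ih => max (N (j + 1)) ih) j
    have hNmmono : Monotone Nm := by
      apply monotone_nat_of_le_succ
      intro j
      exact le_max_right _ _
    have hNmge : ∀ j, N j ≤ Nm j := by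
      intro j
      cases j with
      | zero => exact le_refl _
      | succ j => exact le_max_left _ _
    have hP : ∀ j k l, Nm j ≤ k → Nm j ≤ l → s k ≠ s l → j ≤ (lcp (s k) (s l)).length := by
      intro j k l hk hl hne
      have hd := hNs j k ((hNmge j).trans hk) l ((hNmge j).trans hl)
      have h1 := rho_lower hne
      have h2 := hdist k l
      have : w ((lcp (s k) (s l)).length + 1) < w (j + 1) := by linarith
      have := w_strict.lt_iff_gt.mp this
      omega
    -- each s (Nm j) has length ≥ j
    have hlen : ∀ j, j ≤ (s (Nm j)).length := by
      intro j
      obtain ⟨k, hk, hne⟩ := hnc (Nm j)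
      have := hP j k (Nm j) hk (le_refl _) hne
      exact this.trans (lcp_prefix_right _ _).length_le
    -- the branch
    have htake : ∀ j k, Nm j ≤ k → j ≤ (s k).length → (s k).take j = (s (Nm j)).take j := by
      intro j k hk hlk
      by_cases hne : s k = s (Nm j)
      · rw [hne]
      · exact take_eq_take_of_lcp (hP j k (Nm j) hk (le_refl _) hne)
    refine hwf ⟨fun j => (s (Nm j)).take j, fun j => ht _ ((p (Nm j)).2.1) _ (List.take_prefix _ _), ?_⟩
    intro j
    simp only []
    constructor
    · show List.take j (s (Nm j)) <+: List.take (j+1) (s (Nm (j+1)))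
      have h1 : (s (Nm (j+1))).take j = (s (Nm j)).take j :=
        htake j (Nm (j+1)) (hNmmono (Nat.le_succ j)) ((Nat.le_succ j).trans (hlen (j+1)))
      rw [← h1]
      have : (s (Nm (j+1))).take j = ((s (Nm (j+1))).take (j+1)).take j := by
        rw [List.take_take, min_eq_left (Nat.le_succ j)]
      rw [this]
      exact List.take_prefix _ _
    · show List.take j (s (Nm j)) ≠ List.take (j+1) (s (Nm (j+1)))
      intro he
      have l1 : ((s (Nm j)).take j).length = j := by
        simp [List.length_take, min_eq_left (hlen j)]
      have l2 : ((s (Nm (j+1))).take (j+1)).length = j+1 := by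
        simp [List.length_take, min_eq_left (hlen (j+1))]
      rw [he] at l1
      omega
  -- Step: the whole sequence is eventually constant
  obtain ⟨N₀, hN₀⟩ := hsev
  obtain ⟨N₁, hN₁⟩ := hp (w ((s N₀).length)) (w_pos _)
  set N₂ := max N₀ N₁ with hN₂
  have hconst : ∀ k, N₂ ≤ k → p k = p N₂ := by
    intro k hk
    have hsk : s k = s N₀ := hN₀ k ((le_max_left _ _).trans hk)
    have hsN : s N₂ = s N₀ := hN₀ N₂ (le_max_left _ _)
    have hd := hN₁ k ((le_max_right _ _).trans hk) N₂ (le_max_right _ _)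
    have hde : dist (p k) (p N₂) =
        |av (s k).length (iv k) - av (s N₂).length (iv N₂)| + rho (s k) (s N₂) := rfl
    rw [hsk, hsN, rho_self] at hde
    have hiveq : iv k = iv N₂ := by
      by_contra hne
      have : w ((s N₀).length) ≤ |av (s N₀).length (iv k) - av (s N₀).length (iv N₂)| := by
        have : av (s N₀).length (iv k) - av (s N₀).length (iv N₂)
            = ((iv k : ℝ) - (iv N₂ : ℝ)) * w (s N₀).length := by
          unfold av; ring
        rw [this, abs_mul, abs_of_pos (w_pos _)]
        have h1 : (1:ℝ) ≤ |(iv k : ℝ) - (iv N₂ : ℝ)| := by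
          have : ((iv k : ℤ)) ≠ (iv N₂ : ℤ) := by exact_mod_cast hne
          have h2 : (1:ℤ) ≤ |(iv k : ℤ) - (iv N₂ : ℤ)| := Int.one_le_abs (sub_ne_zero.mpr this)
          have : ((1:ℤ):ℝ) ≤ (|(iv k : ℤ) - (iv N₂ : ℤ)| : ℝ) := by exact_mod_cast h2
          simpa [Int.cast_abs] using this
        nlinarith [w_pos (s N₀).length]
      linarith [hde ▸ hd]
    have : (p k).1 = (p N₂).1 := Prod.ext (hsk.trans hsN.symm) hiveq
    exact Subtype.ext this
  refine ⟨p N₂, ?_⟩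
  apply Filter.Tendsto.congr' (f₁ := fun _ => p N₂)
  · filter_upwards [Filter.eventually_atTop.mpr ⟨N₂, hconst⟩] with k hk
    exact hk.symm
  · exact tendsto_const_nhds

lemma wellFounded_of_no_desc {α : Type*} {r : α → α → Prop}
    (h : ∀ f : ℕ → α, ¬ ∀ n, r (f (n + 1)) (f n)) : WellFounded r := by
  constructor
  intro a
  by_contra ha
  have key : ∀ b, ¬ Acc r b → ∃ c, r c b ∧ ¬ Acc r c := by
    intro b hb
    by_contra hc
    push_neg at hc
    exact hb (Acc.intro b fun c hcb => hc c hcb)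
  choose F hF using key
  let f : ℕ → {b : α // ¬ Acc r b} := fun n =>
    Nat.rec ⟨a, ha⟩ (fun _ p => ⟨F p.1 p.2, (hF p.1 p.2).2⟩) n
  exact h (fun n => (f n).1) (fun n => (hF (f n).1 (f n).2).1)

lemma w_mul_pow (m : ℕ) : w m * (2:ℝ) ^ m = 1 := by
  rw [w, ← mul_pow]; norm_num

lemma av_scale {m Δ : ℕ} (i : ℕ) : av (m + Δ) (i * 2 ^ Δ) = av m i := by
  unfold av w
  push_cast
  rw [pow_add]
  have h2 : (2:ℝ) ^ Δ * (2⁻¹:ℝ) ^ Δ = 1 := by rw [← mul_pow]; norm_num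
  calc (i:ℝ) * (2:ℝ) ^ Δ * ((2⁻¹:ℝ) ^ m * (2⁻¹:ℝ) ^ Δ)
      = (i:ℝ) * (2⁻¹:ℝ) ^ m * ((2:ℝ) ^ Δ * (2⁻¹:ℝ) ^ Δ) := by ring
    _ = (i:ℝ) * (2⁻¹:ℝ) ^ m := by rw [h2, mul_one]

section Mside

variable {M : Type} [MetricSpace M] [CompleteSpace M]

/-- a "good node": a coarse record of a uniformly bi-Lipschitz image of the dyadic net -/
def GN (q : ℕ → M) (k : ℕ) (s v : List ℕ) : Prop :=
  ∀ i, i ≤ 2 ^ s.length → ∀ j, j ≤ 2 ^ s.length →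
    dist (q (v.getD i 0)) (q (v.getD j 0)) ≤
      ((k:ℝ) + 1) * |av s.length i - av s.length j| + 2 * w s.length ∧
    ((k:ℝ) + 1)⁻¹ * |av s.length i - av s.length j| - 2 * w s.length ≤
      dist (q (v.getD i 0)) (q (v.getD j 0))

/-- the relation on coded approximation nodes -/
def Rel (q : ℕ → M) (k : ℕ) (pb pa : List ℕ × List ℕ) : Prop :=
  GN q k pa.1 pa.2 ∧ GN q k pb.1 pb.2 ∧ pa.1 <+: pb.1 ∧ pa.1 ≠ pb.1 ∧
  ∀ i, i ≤ 2 ^ pa.1.length →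
    dist (q (pb.2.getD (i * 2 ^ (pb.1.length - pa.1.length)) 0)) (q (pa.2.getD i 0))
      ≤ ((k:ℝ) + 2) * w pa.1.length

theorem chain_biLip (q : ℕ → M) (k : ℕ) (d : ℕ → List ℕ × List ℕ)
    (hd : ∀ n, Rel q k (d (n + 1)) (d n)) :
    ∃ g : ↥(Icc (0:ℝ) 1) → M,
      (∀ x y, ((k:ℝ) + 1)⁻¹ * dist x y ≤ dist (g x) (g y)) ∧
      (∀ x y, dist (g x) (g y) ≤ ((k:ℝ) + 1) * dist x y) := by
  set s : ℕ → List ℕ := fun n => (d n).1 with hs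
  set v : ℕ → List ℕ := fun n => (d n).2 with hv
  set m : ℕ → ℕ := fun n => (s n).length with hm
  have hGN : ∀ n, GN q k (s n) (v n) := by
    intro n
    cases n with
    | zero => exact (hd 0).1
    | succ n => exact (hd n).2.1
  have hpre : ∀ n, s n <+: s (n + 1) ∧ s n ≠ s (n + 1) := fun n => ⟨(hd n).2.2.1, (hd n).2.2.2.1⟩
  have hmlt : StrictMono m := by
    apply strictMono_nat_of_lt_succ
    intro n
    exact lt_of_le_of_ne (hpre n).1.length_le
      (fun he => (hpre n).2 ((hpre n).1.eq_of_length he))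
  have hmn : ∀ n, n ≤ m n := fun n => hmlt.le_apply
  -- the approximating sequence of points
  set jn : ℕ → ↥(Icc (0:ℝ) 1) → ℕ := fun n x => ⌊(x:ℝ) * 2 ^ m n⌋₊ with hjn
  have hjle : ∀ n x, jn n x ≤ 2 ^ m n := by
    intro n x
    have hx1 : (x:ℝ) ≤ 1 := x.2.2
    have : (x:ℝ) * 2 ^ m n ≤ 2 ^ m n := by nlinarith [pow_pos (by norm_num : (0:ℝ) < 2) (m n)]
    calc jn n x ≤ ⌊((2:ℝ)) ^ m n⌋₊ := Nat.floor_le_floor this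
      _ = 2 ^ m n := by
          rw [show ((2:ℝ)) ^ m n = ((2 ^ m n : ℕ) : ℝ) by push_cast; ring]
          exact Nat.floor_natCast _
  have hjav : ∀ n (x : ↥(Icc (0:ℝ) 1)), |av (m n) (jn n x) - (x:ℝ)| ≤ w (m n) := by
    intro n x
    have hx0 : (0:ℝ) ≤ (x:ℝ) := x.2.1
    have h0 : (0:ℝ) ≤ (x:ℝ) * 2 ^ m n := by positivity
    have h1 : (jn n x : ℝ) ≤ (x:ℝ) * 2 ^ m n := Nat.floor_le h0
    have h2 : (x:ℝ) * 2 ^ m n < jn n x + 1 := Nat.lt_floor_add_one _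
    have hwp := w_pos (m n)
    have hkey : av (m n) (jn n x) - (x:ℝ) = ((jn n x : ℝ) - (x:ℝ) * 2 ^ m n) * w (m n) := by
      unfold av
      have := w_mul_pow (m n)
      nlinarith [w_mul_pow (m n)]
    rw [hkey, abs_mul, abs_of_pos hwp]
    have : |(jn n x : ℝ) - (x:ℝ) * 2 ^ m n| ≤ 1 := by
      rw [abs_le]; constructor <;> nlinarith
    nlinarith
  set un : ℕ → ↥(Icc (0:ℝ) 1) → M := fun n x => q ((v n).getD (jn n x) 0) with hun
  -- consecutive step estimate
  have hstep : ∀ n x, dist (un n x) (un (n + 1) x) ≤ (3 * (k:ℝ) + 6) * (2⁻¹:ℝ) ^ n := by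
    intro n x
    have hΔ : m n + (m (n + 1) - m n) = m (n + 1) := Nat.add_sub_cancel' (hmlt (Nat.lt_succ_self n)).le
    have hsc : av (m (n + 1)) (jn n x * 2 ^ (m (n + 1) - m n)) = av (m n) (jn n x) := by
      have h := av_scale (m := m n) (Δ := m (n + 1) - m n) (jn n x)
      rw [hΔ] at h
      exact h
    have hscale_le : jn n x * 2 ^ (m (n + 1) - m n) ≤ 2 ^ m (n + 1) := by
      calc jn n x * 2 ^ (m (n + 1) - m n) ≤ 2 ^ m n * 2 ^ (m (n + 1) - m n) :=
            Nat.mul_le_mul_right _ (hjle n x)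
        _ = 2 ^ m (n + 1) := by rw [← pow_add, hΔ]
    have hG := (hGN (n + 1) (jn (n + 1) x) (hjle (n + 1) x)
      (jn n x * 2 ^ (m (n + 1) - m n)) hscale_le).1
    have hR := (hd n).2.2.2.2 (jn n x) (hjle n x)
    have havd : |av (m (n + 1)) (jn (n + 1) x) - av (m (n + 1)) (jn n x * 2 ^ (m (n + 1) - m n))|
        ≤ 2 * w (m n) := by
      rw [hsc]
      have h1 := hjav (n + 1) x
      have h2 := hjav n x
      have h3 : w (m (n + 1)) ≤ w (m n) := w_antitone (hmlt (Nat.lt_succ_self n)).le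
      calc |av (m (n + 1)) (jn (n + 1) x) - av (m n) (jn n x)|
          ≤ |av (m (n + 1)) (jn (n + 1) x) - (x:ℝ)| + |av (m n) (jn n x) - (x:ℝ)| := by
            rw [abs_sub_comm (av (m n) (jn n x)) _]; exact abs_sub_le _ _ _
        _ ≤ 2 * w (m n) := by linarith
    have htri : dist (un n x) (un (n + 1) x) ≤
        dist (q ((v (n+1)).getD (jn (n+1) x) 0))
          (q ((v (n+1)).getD (jn n x * 2 ^ (m (n + 1) - m n)) 0)) +
        dist (q ((v (n+1)).getD (jn n x * 2 ^ (m (n + 1) - m n)) 0)) (q ((v n).getD (jn n x) 0)) := by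
      rw [dist_comm (un n x) _]
      exact dist_triangle _ _ _
    have hwm : w (m n) ≤ (2⁻¹:ℝ) ^ n := by
      have := w_antitone (hmn n)
      simpa [w] using this
    have hk0 : (0:ℝ) ≤ (k:ℝ) := Nat.cast_nonneg k
    have hwp := w_pos (m n)
    have h3 : w (m (n + 1)) ≤ w (m n) := w_antitone (hmlt (Nat.lt_succ_self n)).le
    have htot : dist (un n x) (un (n + 1) x) ≤ (3 * (k:ℝ) + 6) * w (m n) := by
      have := htri
      have hG' : dist (q ((v (n+1)).getD (jn (n+1) x) 0))
          (q ((v (n+1)).getD (jn n x * 2 ^ (m (n + 1) - m n)) 0)) ≤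
          ((k:ℝ) + 1) * (2 * w (m n)) + 2 * w (m (n + 1)) := by
        refine hG.trans ?_
        have : (0:ℝ) ≤ (k:ℝ) + 1 := by linarith
        nlinarith [havd]
      nlinarith [hR]
    refine htot.trans ?_
    have : (0:ℝ) ≤ 3 * (k:ℝ) + 6 := by linarith
    nlinarith
  -- Cauchy and limits
  have hcauchy : ∀ x, CauchySeq (fun n => un n x) := by
    intro x
    exact cauchySeq_of_le_geometric (2⁻¹:ℝ) (3 * (k:ℝ) + 6) (by norm_num) (fun n => hstep n x)
  have hlim : ∀ x, ∃ a : M, Filter.Tendsto (fun n => un n x) Filter.atTop (nhds a) := by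
    intro x
    exact cauchySeq_tendsto_of_complete (hcauchy x)
  choose g hg using hlim
  have main : ∀ x y, (((k:ℝ) + 1)⁻¹ * dist x y ≤ dist (g x) (g y)) ∧
      (dist (g x) (g y) ≤ ((k:ℝ) + 1) * dist x y) := by
    intro x y
    have hdt : Filter.Tendsto (fun n => dist (un n x) (un n y)) Filter.atTop
        (nhds (dist (g x) (g y))) := (hg x).dist (hg y)
    have limpow : Filter.Tendsto (fun n : ℕ => (2⁻¹:ℝ) ^ n) Filter.atTop (nhds 0) :=
      tendsto_pow_atTop_nhds_zero_of_lt_one (by norm_num) (by norm_num)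
    have hw0 : Filter.Tendsto (fun n => w (m n)) Filter.atTop (nhds 0) :=
      squeeze_zero (fun n => (w_pos (m n)).le)
        (fun n => by simpa [w] using w_antitone (hmn n)) limpow
    have hdxy : dist x y = |(x:ℝ) - (y:ℝ)| := by
      rw [Subtype.dist_eq, Real.dist_eq]
    have havxy : ∀ n, |(|av (m n) (jn n x) - av (m n) (jn n y)| - |(x:ℝ) - (y:ℝ)|)|
        ≤ 2 * w (m n) := by
      intro n
      have h1 := hjav n x
      have h2 := hjav n y
      have key : |(av (m n) (jn n x) - av (m n) (jn n y)) - ((x:ℝ) - (y:ℝ))| ≤ 2 * w (m n) := by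
        have heq : (av (m n) (jn n x) - av (m n) (jn n y)) - ((x:ℝ) - (y:ℝ)) =
            (av (m n) (jn n x) - (x:ℝ)) - (av (m n) (jn n y) - (y:ℝ)) := by ring
        rw [heq]
        calc |(av (m n) (jn n x) - (x:ℝ)) - (av (m n) (jn n y) - (y:ℝ))|
            ≤ |av (m n) (jn n x) - (x:ℝ)| + |av (m n) (jn n y) - (y:ℝ)| := abs_sub _ _
          _ ≤ 2 * w (m n) := by linarith
      exact (abs_abs_sub_abs_le_abs_sub _ _).trans key
    have hGn := fun n => hGN n (jn n x) (hjle n x) (jn n y) (hjle n y)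
    constructor
    · -- lower bound
      have hlimA : Filter.Tendsto
          (fun n => ((k:ℝ) + 1)⁻¹ * (|(x:ℝ) - (y:ℝ)| - 2 * w (m n)) - 2 * w (m n))
          Filter.atTop (nhds (((k:ℝ) + 1)⁻¹ * dist x y)) := by
        rw [hdxy]
        have hlim2 : Filter.Tendsto
            (fun n => ((k:ℝ) + 1)⁻¹ * (|(x:ℝ) - (y:ℝ)| - 2 * w (m n)) - 2 * w (m n))
            Filter.atTop (nhds (((k:ℝ) + 1)⁻¹ * (|(x:ℝ) - (y:ℝ)| - 2 * 0) - 2 * 0)) :=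
          ((tendsto_const_nhds.sub (hw0.const_mul 2)).const_mul _).sub (hw0.const_mul 2)
        simpa using hlim2
      refine le_of_tendsto_of_tendsto' hlimA hdt ?_
      intro n
      have hlow := (hGn n).2
      have habs := abs_le.mp (havxy n)
      have hkinv : (0:ℝ) < ((k:ℝ) + 1)⁻¹ := by positivity
      have h1 : |(x:ℝ) - (y:ℝ)| - 2 * w (m n) ≤ |av (m n) (jn n x) - av (m n) (jn n y)| := by
        linarith [habs.1]
      nlinarith [mul_le_mul_of_nonneg_left h1 hkinv.le]
    · -- upper bound
      have hlimB : Filter.Tendsto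
          (fun n => ((k:ℝ) + 1) * (|(x:ℝ) - (y:ℝ)| + 2 * w (m n)) + 2 * w (m n))
          Filter.atTop (nhds (((k:ℝ) + 1) * dist x y)) := by
        rw [hdxy]
        have hlim2 : Filter.Tendsto
            (fun n => ((k:ℝ) + 1) * (|(x:ℝ) - (y:ℝ)| + 2 * w (m n)) + 2 * w (m n))
            Filter.atTop (nhds (((k:ℝ) + 1) * (|(x:ℝ) - (y:ℝ)| + 2 * 0) + 2 * 0)) :=
          ((tendsto_const_nhds.add (hw0.const_mul 2)).const_mul _).add (hw0.const_mul 2)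
        simpa using hlim2
      refine le_of_tendsto_of_tendsto' hdt hlimB ?_
      intro n
      have hup := (hGn n).1
      have habs := abs_le.mp (havxy n)
      have h1 : |av (m n) (jn n x) - av (m n) (jn n y)| ≤ |(x:ℝ) - (y:ℝ)| + 2 * w (m n) := by
        linarith [habs.2]
      have hk1 : (0:ℝ) ≤ (k:ℝ) + 1 := by positivity
      have hwp := (w_pos (m n)).le
      nlinarith [mul_le_mul_of_nonneg_left h1 hk1]
  exact ⟨g, fun x y => (main x y).1, fun x y => (main x y).2⟩

end Mside

section RankTools

lemma no_desc {α : Type*} {r : α → α → Prop} (h : WellFounded r) (f : ℕ → α)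
    (hf : ∀ n, r (f (n + 1)) (f n)) : False := by
  have key : ∀ a, ∀ n, f n = a → False := by
    intro a
    induction h.apply a with
    | intro a ha IH =>
      intro n hn
      exact IH (f (n + 1)) (hn ▸ hf n) (n + 1) rfl
  exact key (f 0) 0 rfl

lemma rank_le_of_relHom {α β : Type} {r : α → α → Prop} {s : β → β → Prop}
    (hr : WellFounded r) (hs : WellFounded s) (F : α → β)
    (hF : ∀ a b, r a b → s (F a) (F b)) (a : α) :
    @IsWellFounded.rank α r ⟨hr⟩ a ≤ @IsWellFounded.rank β s ⟨hs⟩ (F a) := by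
  letI : IsWellFounded α r := ⟨hr⟩
  letI : IsWellFounded β s := ⟨hs⟩
  induction a using hr.induction with
  | _ a IH =>
    rw [IsWellFounded.rank_eq]
    refine Ordinal.iSup_le ?_
    rintro ⟨b, hb⟩
    have h1 : IsWellFounded.rank r b ≤ IsWellFounded.rank s (F b) := IH b hb
    have h2 : IsWellFounded.rank s (F b) < IsWellFounded.rank s (F a) :=
      IsWellFounded.rank_lt_of_rel (hF b a hb)
    exact Order.succ_le_iff.mpr (lt_of_le_of_lt h1 h2)

lemma rank_lt_omega1 {α : Type} [Countable α] {r : α → α → Prop} (hr : WellFounded r) (a : α) :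
    @IsWellFounded.rank α r ⟨hr⟩ a < (Cardinal.aleph 1).ord := by
  letI : IsWellFounded α r := ⟨hr⟩
  induction a using hr.induction with
  | _ a IH =>
    rw [IsWellFounded.rank_eq]
    rw [Cardinal.ord_aleph]
    apply Ordinal.iSup_lt_omega_one
    rintro ⟨b, hb⟩
    rw [← Cardinal.ord_aleph]
    exact (Cardinal.isSuccLimit_ord (Cardinal.aleph0_le_aleph 1)).succ_lt (IH b hb)

/-- the reverse-extension relation on a tree -/
def TRel (t : Set (List ℕ)) : {l : List ℕ // l ∈ t} → {l : List ℕ // l ∈ t} → Prop :=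
  fun a b => b.1 <+: a.1 ∧ a.1 ≠ b.1

lemma trel_wf {t : Set (List ℕ)} (hwf : ¬ Ill t) : WellFounded (TRel t) := by
  apply wellFounded_of_no_desc
  intro f hf
  apply hwf
  refine ⟨fun n => (f n).1, fun n => (f n).2, fun n => ⟨(hf n).1, fun he => (hf n).2 he.symm⟩⟩

lemma exists_highrank (α : Ordinal.{0}) (hα : α < (Cardinal.aleph 1).ord) :
    ∃ (t : Set (List ℕ)) (hmem : [] ∈ t), IsTree t ∧ ¬ Ill t ∧
      ∀ (hw : ¬ Ill t), α ≤ @IsWellFounded.rank _ (TRel t) ⟨trel_wf hw⟩ ⟨[], hmem⟩ := by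
  rcases eq_or_ne α 0 with rfl | hα0
  · refine ⟨{[]}, rfl, ?_, ?_, ?_⟩
    · intro l hl l' hl'
      simp only [mem_singleton_iff] at hl
      subst hl
      simpa using List.eq_nil_of_prefix_nil hl'
    · rintro ⟨c, hc, hcc⟩
      have h0 : c 0 = [] := hc 0
      have h1 : c 1 = [] := hc 1
      exact (hcc 0).2 (h0.trans h1.symm)
    · intro _
      exact zero_le
  · -- enumeration of ordinals below α
    have hcard : α.card ≤ Cardinal.aleph0 := by
      have h1 : α.card < Cardinal.aleph 1 := Cardinal.lt_ord.mp hα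
      rwa [← Cardinal.succ_aleph0, Order.lt_succ_iff] at h1
    have hcount : Countable α.ToType := by
      rw [← Cardinal.mk_le_aleph0_iff, Cardinal.mk_toType]
      exact hcard
    have hne : Nonempty α.ToType := Ordinal.nonempty_toType_iff.mpr hα0
    obtain ⟨e₀, he₀⟩ := exists_surjective_nat α.ToType
    set e : ℕ → Ordinal := fun n => ((Ordinal.ToType.mk (o := α)).symm (e₀ n)).1 with he
    have helt : ∀ n, e n < α := fun n => ((Ordinal.ToType.mk (o := α)).symm (e₀ n)).2
    have hesurj : ∀ β, β < α → ∃ n, e n = β := by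
      intro β hβ
      obtain ⟨n, hn⟩ := he₀ ((Ordinal.ToType.mk (o := α)) ⟨β, hβ⟩)
      refine ⟨n, ?_⟩
      rw [he]
      simp only [hn, OrderIso.symm_apply_apply]
    set t : Set (List ℕ) := {l | (l.map e).Pairwise (· > ·)} with hts
    have hmem : [] ∈ t := by simp [hts]
    have htree : IsTree t := by
      intro l hl l' hl'
      exact List.Pairwise.sublist (hl'.map e).sublist hl
    -- well-foundedness of TRel t, directly
    have hwfT : WellFounded (TRel t) := by
      set μ : {l : List ℕ // l ∈ t} → Ordinal :=
        fun a => if h : a.1 = [] then α else e (a.1.getLast h) with hμ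
      have hsub : ∀ a b, TRel t a b → μ a < μ b := by
        rintro ⟨a, ha⟩ ⟨b, hb⟩ ⟨hpre0, hne0⟩
        have hpre : b <+: a := hpre0
        have hne' : a ≠ b := hne0
        have hane : a ≠ [] := by
          rintro rfl
          exact hne' (List.eq_nil_of_prefix_nil hpre).symm
        have hlb : b.length < a.length :=
          lt_of_le_of_ne hpre.length_le (fun h => hne' (hpre.eq_of_length h).symm)
        simp only [hμ, dif_neg hane]
        rcases eq_or_ne b [] with rfl | hbne
        · simp only [dif_pos rfl]
          exact helt _
        · simp only [dif_neg hbne]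
          -- getLast b сompare getLast a inside a
          have hpw : (a.map e).Pairwise (· > ·) := ha
          rw [List.pairwise_iff_get] at hpw
          have hb1 : b.length - 1 < a.length := by omega
          have hbl : 0 < b.length := List.length_pos_iff.mpr hbne
          have ha1 : a.length - 1 < a.length := by omega
          have hgb : b.getLast hbne = a.get ⟨b.length - 1, hb1⟩ := by
            rw [List.getLast_eq_getElem, List.get_eq_getElem]
            exact (hpre.getElem (by omega))
          have hga : a.getLast hane = a.get ⟨a.length - 1, ha1⟩ := by rw [List.getLast_eq_getElem, List.get_eq_getElem]
          have hmap : ∀ (i : Fin a.length), (a.map e).get ⟨i, by simp⟩ = e (a.get i) := by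
            intro i
            simp
          have hfin1 : b.length - 1 < (a.map e).length := by
            rw [List.length_map]; omega
          have hfin2 : a.length - 1 < (a.map e).length := by
            rw [List.length_map]; omega
          have hlt := hpw ⟨b.length - 1, hfin1⟩ ⟨a.length - 1, hfin2⟩
            (Fin.mk_lt_mk.mpr (by omega))
          have e1 := hmap ⟨b.length - 1, hb1⟩
          have e2 := hmap ⟨a.length - 1, ha1⟩
          rw [e1, e2] at hlt
          rw [hga, hgb]
          exact hlt
      exact Subrelation.wf (fun {a b} h => hsub a b h) (InvImage.wf μ Ordinal.lt_wf)
    have hill : ¬ Ill t := by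
      rintro ⟨c, hc, hcc⟩
      exact no_desc hwfT (fun n => ⟨c n, hc n⟩)
        (fun n => ⟨(hcc n).1, Ne.symm (hcc n).2⟩)
    refine ⟨t, hmem, htree, hill, ?_⟩
    intro hw
    letI : IsWellFounded {l : List ℕ // l ∈ t} (TRel t) := ⟨trel_wf hw⟩
    -- main claim by transfinite induction
    have claim : ∀ β, β < α → ∀ l (hl : l ∈ t), (∀ γ ∈ l.map e, β < γ) →
        β < IsWellFounded.rank (TRel t) ⟨l, hl⟩ := by
      intro β
      induction β using Ordinal.induction with
      | _ β IH =>
        intro hβ l hl hvals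
        obtain ⟨n, hn⟩ := hesurj β hβ
        have hl' : l ++ [n] ∈ t := by
          have : ((l ++ [n]).map e).Pairwise (· > ·) := by
            rw [List.map_append, List.pairwise_append]
            refine ⟨hl, by simp, ?_⟩
            intro a ha b hb
            simp only [List.map_cons, List.map_nil, List.mem_singleton] at hb
            subst hb
            rw [hn]
            exact hvals a ha
          exact this
        have hrel : TRel t ⟨l ++ [n], hl'⟩ ⟨l, hl⟩ := by
          refine ⟨List.prefix_append l [n], ?_⟩
          intro hcontra
          have := congrArg List.length hcontra
          simp at this
        have hstep : ∀ β', β' < β → β' < IsWellFounded.rank (TRel t) ⟨l ++ [n], hl'⟩ := by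
          intro β' hβ'
          refine IH β' hβ' (hβ'.trans hβ) (l ++ [n]) hl' ?_
          intro γ hγ
          rw [List.map_append] at hγ
          rcases List.mem_append.mp hγ with h | h
          · exact hβ'.trans (hvals γ h)
          · simp only [List.map_cons, List.map_nil, List.mem_singleton] at h
            subst h
            rwa [hn]
        have hge : β ≤ IsWellFounded.rank (TRel t) ⟨l ++ [n], hl'⟩ := by
          by_contra hcon
          push_neg at hcon
          exact absurd (hstep _ hcon) (lt_irrefl _)
        exact lt_of_le_of_lt hge (IsWellFounded.rank_lt_of_rel hrel)
    by_contra hcon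
    push_neg at hcon
    exact absurd (claim _ hcon [] hmem (by simp)) (lt_irrefl _)

end RankTools

section Phi

variable {M : Type} [MetricSpace M]

lemma range_map_getD (n : ℕ) (g : ℕ → ℕ) {i : ℕ} (h : i < n) :
    ((List.range n).map g).getD i 0 = g i := by
  simp [List.getD_eq_getElem?_getD, List.getElem?_map, List.getElem?_range h]

lemma xdist_eq {t : Set (List ℕ)} (p r : X t) :
    dist p r = |av p.1.1.length p.1.2 - av r.1.1.length r.1.2| + rho p.1.1 r.1.1 := rfl

theorem phi_exists (q : ℕ → M) (hq : DenseRange q) (k : ℕ) (t : Set (List ℕ))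
    (f : X t → M)
    (h1 : ∀ u v : X t, ((k:ℝ) + 1)⁻¹ * dist u v ≤ dist (f u) (f v))
    (h2 : ∀ u v : X t, dist (f u) (f v) ≤ ((k:ℝ) + 1) * dist u v) :
    ∃ φ : {l : List ℕ // l ∈ t} → List ℕ × List ℕ,
      ∀ a b, TRel t a b → Rel q k (φ a) (φ b) := by
  have hex : ∀ (s : List ℕ) (hs : s ∈ t) (i : ℕ) (hi : i ≤ 2 ^ s.length),
      ∃ n, dist (q n) (f ⟨(s, i), hs, hi⟩) ≤ w s.length := by
    intro s hs i hi
    obtain ⟨n, hn⟩ := hq.exists_dist_lt (f ⟨(s, i), hs, hi⟩) (w_pos s.length)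
    exact ⟨n, by rw [dist_comm]; exact hn.le⟩
  choose sel hsel using hex
  set vlist : ∀ (s : List ℕ), s ∈ t → List ℕ := fun s hs =>
    (List.range (2 ^ s.length + 1)).map
      (fun i => if h : i ≤ 2 ^ s.length then sel s hs i h else 0) with hvlist
  have hv : ∀ (s : List ℕ) (hs : s ∈ t) (i : ℕ) (hi : i ≤ 2 ^ s.length),
      dist (q ((vlist s hs).getD i 0)) (f ⟨(s, i), hs, hi⟩) ≤ w s.length := by
    intro s hs i hi
    rw [hvlist]
    rw [range_map_getD _ _ (by omega : i < 2 ^ s.length + 1), dif_pos hi]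
    exact hsel s hs i hi
  have hGN : ∀ (s : List ℕ) (hs : s ∈ t), GN q k s (vlist s hs) := by
    intro s hs i hi j hj
    set pi : X t := ⟨(s, i), hs, hi⟩ with hpi
    set pj : X t := ⟨(s, j), hs, hj⟩ with hpj
    have hdX : dist pi pj = |av s.length i - av s.length j| := by
      rw [xdist_eq]
      show |av s.length i - av s.length j| + rho s s = _
      simp [rho_self]
    have hvi : dist (q ((vlist s hs).getD i 0)) (f pi) ≤ w s.length := hv s hs i hi
    have hvj : dist (q ((vlist s hs).getD j 0)) (f pj) ≤ w s.length := hv s hs j hj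
    have hvi' : dist (f pi) (q ((vlist s hs).getD i 0)) ≤ w s.length := by
      rw [dist_comm]; exact hvi
    have hvj' : dist (f pj) (q ((vlist s hs).getD j 0)) ≤ w s.length := by
      rw [dist_comm]; exact hvj
    have hup := h2 pi pj
    have hlo := h1 pi pj
    rw [hdX] at hup hlo
    constructor
    · have htri : dist (q ((vlist s hs).getD i 0)) (q ((vlist s hs).getD j 0))
          ≤ dist (q ((vlist s hs).getD i 0)) (f pi) + dist (f pi) (f pj) +
            dist (f pj) (q ((vlist s hs).getD j 0)) := dist_triangle4 _ _ _ _
      linarith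
    · have htri : dist (f pi) (f pj) ≤ dist (f pi) (q ((vlist s hs).getD i 0)) +
          dist (q ((vlist s hs).getD i 0)) (q ((vlist s hs).getD j 0)) +
          dist (q ((vlist s hs).getD j 0)) (f pj) := dist_triangle4 _ _ _ _
      rw [dist_comm (q ((vlist s hs).getD j 0)) (f pj)] at htri
      linarith
  refine ⟨fun a => (a.1, vlist a.1 a.2), ?_⟩
  rintro ⟨s', hs'⟩ ⟨s, hs⟩ ⟨hpre0, hne0⟩
  have hpre : s <+: s' := hpre0
  have hne : s' ≠ s := hne0
  refine ⟨hGN s hs, hGN s' hs', hpre, Ne.symm hne, ?_⟩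
  intro i hi
  have hΔ : s.length + (s'.length - s.length) = s'.length :=
    Nat.add_sub_cancel' hpre.length_le
  have hi' : i * 2 ^ (s'.length - s.length) ≤ 2 ^ s'.length := by
    calc i * 2 ^ (s'.length - s.length) ≤ 2 ^ s.length * 2 ^ (s'.length - s.length) :=
          Nat.mul_le_mul_right _ hi
      _ = 2 ^ s'.length := by rw [← pow_add, hΔ]
  set p' : X t := ⟨(s', i * 2 ^ (s'.length - s.length)), hs', hi'⟩ with hp'
  set p : X t := ⟨(s, i), hs, hi⟩ with hp
  have hav : av s'.length (i * 2 ^ (s'.length - s.length)) = av s.length i := by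
    have h := av_scale (m := s.length) (Δ := s'.length - s.length) i
    rw [hΔ] at h
    exact h
  have hdX : dist p' p = w s.length - w s'.length := by
    rw [xdist_eq]
    simp only [hp', hp]
    rw [hav, rho_comm, rho_eq_of_prefix hpre]
    simp
  have hv1 : dist (q ((vlist s' hs').getD (i * 2 ^ (s'.length - s.length)) 0)) (f p')
      ≤ w s'.length := hv s' hs' _ hi'
  have hv2 : dist (q ((vlist s hs).getD i 0)) (f p) ≤ w s.length := hv s hs i hi
  have hv2' : dist (f p) (q ((vlist s hs).getD i 0)) ≤ w s.length := by
    rw [dist_comm]; exact hv2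
  have hup := h2 p' p
  rw [hdX] at hup
  have hw' := w_pos s'.length
  have hk0 : (0:ℝ) ≤ (k:ℝ) := Nat.cast_nonneg k
  have htri : dist (q ((vlist s' hs').getD (i * 2 ^ (s'.length - s.length)) 0))
        (q ((vlist s hs).getD i 0))
      ≤ dist (q ((vlist s' hs').getD (i * 2 ^ (s'.length - s.length)) 0)) (f p') +
        dist (f p') (f p) + dist (f p) (q ((vlist s hs).getD i 0)) := dist_triangle4 _ _ _ _
  have hww : w s'.length ≤ w s.length := w_antitone hpre.length_le
  nlinarith
end Phi

end P13

/-- `N` admits a bi-Lipschitz embedding into `M`, i.e. `N` is Lipschitz-equivalent to a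
subspace of `M`. -/
def BiLipEmb (N : Type*) (M : Type*) [MetricSpace N] [MetricSpace M] : Prop :=
  ∃ f : N → M, ∃ C₁ C₂ : ℝ, 0 < C₁ ∧
    (∀ u v : N, C₁ * dist u v ≤ dist (f u) (f v)) ∧
    (∀ u v : N, dist (f u) (f v) ≤ C₂ * dist u v)

/-- **Corollary 1.3.** A separable complete metric space that is Lipschitz-universal for all
countable complete metric spaces is not purely 1-unrectifiable: it contains a bi-Lipschitz
copy of a compact subset of `ℝ` of positive Lebesgue measure. -/
theorem universal_not_purely_unrectifiable (M : Type) [MetricSpace M]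
    [TopologicalSpace.SeparableSpace M] [CompleteSpace M]
    (huniv : ∀ (N : Type) [MetricSpace N], Countable N → CompleteSpace N → BiLipEmb N M) :
    ∃ K : Set ℝ, IsCompact K ∧ 0 < MeasureTheory.volume K ∧ BiLipEmb ↥K M := by
  by_contra hK
  have hne : Nonempty M := by
    obtain ⟨f, _⟩ := huniv PUnit inferInstance inferInstance
    exact ⟨f PUnit.unit⟩
  obtain ⟨q, hq⟩ := TopologicalSpace.exists_dense_seq M
  have hnog : ∀ k : ℕ, ¬ ∃ g : ↥(Icc (0:ℝ) 1) → M,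
      (∀ x y, ((k:ℝ) + 1)⁻¹ * dist x y ≤ dist (g x) (g y)) ∧
      (∀ x y, dist (g x) (g y) ≤ ((k:ℝ) + 1) * dist x y) := by
    rintro k ⟨g, hg1, hg2⟩
    refine hK ⟨Icc 0 1, isCompact_Icc, ?_, g, ((k:ℝ) + 1)⁻¹, (k:ℝ) + 1,
      by positivity, hg1, hg2⟩
    rw [Real.volume_Icc]
    norm_num
  have hwfRel : ∀ k : ℕ, WellFounded (P13.Rel q k) := fun k =>
    P13.wellFounded_of_no_desc (fun d hd => hnog k (P13.chain_biLip q k d hd))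
  set Λ : Ordinal := ⨆ p : (List ℕ × List ℕ) × ℕ,
    Order.succ (@IsWellFounded.rank _ (P13.Rel q p.2) ⟨hwfRel p.2⟩ p.1) with hΛdef
  have hΛlt : Λ < (Cardinal.aleph 1).ord := by
    rw [Cardinal.ord_aleph]
    apply Ordinal.iSup_lt_omega_one
    intro p
    rw [← Cardinal.ord_aleph]
    exact (Cardinal.isSuccLimit_ord (Cardinal.aleph0_le_aleph 1)).succ_lt
      (P13.rank_lt_omega1 (hwfRel p.2) p.1)
  have hsucc : Order.succ Λ < (Cardinal.aleph 1).ord :=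
    (Cardinal.isSuccLimit_ord (Cardinal.aleph0_le_aleph 1)).succ_lt hΛlt
  obtain ⟨t, hmem, htree, hill, hrank⟩ := P13.exists_highrank (Order.succ Λ) hsucc
  haveI hcomp : CompleteSpace (P13.X t) := P13.X_complete t htree hill
  obtain ⟨f, C₁, C₂, hC₁, hf1, hf2⟩ := huniv (P13.X t) inferInstance hcomp
  obtain ⟨k, hk1, hk2⟩ : ∃ k : ℕ, C₂ ≤ (k:ℝ) + 1 ∧ ((k:ℝ) + 1)⁻¹ ≤ C₁ := by
    refine ⟨⌈max C₂ C₁⁻¹⌉₊, ?_, ?_⟩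
    · have h := Nat.le_ceil (max C₂ C₁⁻¹)
      have h2 := le_max_left C₂ C₁⁻¹
      linarith
    · have h := Nat.le_ceil (max C₂ C₁⁻¹)
      have h2 := le_max_right C₂ C₁⁻¹
      have h3 : C₁⁻¹ ≤ (⌈max C₂ C₁⁻¹⌉₊ : ℝ) + 1 := by linarith
      have h4 : (0:ℝ) < C₁⁻¹ := by positivity
      have h5 := inv_anti₀ h4 h3
      rwa [inv_inv] at h5
  have hf1' : ∀ u v : P13.X t, ((k:ℝ) + 1)⁻¹ * dist u v ≤ dist (f u) (f v) := fun u v =>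
    le_trans (mul_le_mul_of_nonneg_right hk2 dist_nonneg) (hf1 u v)
  have hf2' : ∀ u v : P13.X t, dist (f u) (f v) ≤ ((k:ℝ) + 1) * dist u v := fun u v =>
    le_trans (hf2 u v) (mul_le_mul_of_nonneg_right hk1 dist_nonneg)
  obtain ⟨φ, hφ⟩ := P13.phi_exists q hq k t f hf1' hf2'
  have hr1 : Order.succ Λ ≤
      @IsWellFounded.rank _ (P13.TRel t) ⟨P13.trel_wf hill⟩ ⟨[], hmem⟩ := hrank hill
  have hr2 := P13.rank_le_of_relHom (P13.trel_wf hill) (hwfRel k) φ hφ ⟨[], hmem⟩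
  have hr3 : Order.succ (@IsWellFounded.rank _ (P13.Rel q k) ⟨hwfRel k⟩ (φ ⟨[], hmem⟩)) ≤ Λ := by
    rw [hΛdef]
    exact Ordinal.le_iSup
      (fun p : (List ℕ × List ℕ) × ℕ =>
        Order.succ (@IsWellFounded.rank _ (P13.Rel q p.2) ⟨hwfRel p.2⟩ p.1))
      ((φ ⟨[], hmem⟩), k)
  have hcontra : Order.succ Λ ≤ Λ :=
    hr1.trans (hr2.trans ((Order.le_succ _).trans hr3))
  exact lt_irrefl Λ (lt_of_lt_of_le (Order.lt_succ Λ) hcontra)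

end
end

section
/- Let X be a Banach space such that for every ε > 0 there exists an ordinal γ with σ_ε^γ(B_X) = ∅ (i.e., Φ(X) < ∞). Then there exists an ordinal α such that Φ(X) = ω^α, where ω is the first infinite ordinal. -/
open Metric Set Pointwise Topology

noncomputable section

/-- The weak topology on a normed space `X`: the initial topology with respect to all
continuous linear functionals. -/
noncomputable def weakTop (X : Type*) [NormedAddCommGroup X] [NormedSpace ℝ X] :
    TopologicalSpace X :=
  ⨅ f : X →L[ℝ] ℝ, TopologicalSpace.induced (⇑f) inferInstance

/-- A set is weakly open if it is open for the weak topology. -/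
def IsWeaklyOpen {X : Type*} [NormedAddCommGroup X] [NormedSpace ℝ X] (V : Set X) : Prop :=
  @IsOpen X (weakTop X) V

/-- The derived set `σ_ε(K)`: remove from `K` the union of all weakly open sets `V` whose
trace on `K` has (norm) diameter `< ε`. -/
noncomputable def dSet {X : Type*} [NormedAddCommGroup X] [NormedSpace ℝ X] (ε : ℝ)
    (K : Set X) : Set X :=
  K \ ⋃₀ {V : Set X | IsWeaklyOpen V ∧ Metric.diam (V ∩ K) < ε}

/-- The transfinite iterates `σ_ε^α(K)`: `σ_ε^0(K) = K`, `σ_ε^{α+1}(K) = σ_ε(σ_ε^α(K))`,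
and `σ_ε^α(K) = ⋂_{β<α} σ_ε^β(K)` for `α` a limit ordinal. -/
noncomputable def dIter {X : Type*} [NormedAddCommGroup X] [NormedSpace ℝ X] (ε : ℝ)
    (K : Set X) (α : Ordinal.{0}) : Set X :=
  Ordinal.limitRecOn α K (fun _ ih => dSet ε ih)
    (fun o _ ih => ⋂ (β : Ordinal.{0}) (h : β < o), ih β h)

/-- `Φ(X, ε)`: the least ordinal `α` with `σ_ε^α(B_X) = ∅` (junk value `0` if there is none). -/
noncomputable def PhiEps (X : Type*) [NormedAddCommGroup X] [NormedSpace ℝ X] (ε : ℝ) :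
    Ordinal.{0} :=
  sInf {γ : Ordinal.{0} | dIter ε (Metric.closedBall (0 : X) 1) γ = ∅}

/-- `Φ(X, ε)` is well defined, i.e. some derived iterate of the unit ball is empty. -/
def PhiDefinedAt (X : Type*) [NormedAddCommGroup X] [NormedSpace ℝ X] (ε : ℝ) : Prop :=
  ∃ γ : Ordinal.{0}, dIter ε (Metric.closedBall (0 : X) 1) γ = ∅

/-- `Φ(X) < ∞`, i.e. `Φ(X, ε)` is well defined for every `ε > 0`. -/
def PhiDefined (X : Type*) [NormedAddCommGroup X] [NormedSpace ℝ X] : Prop :=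
  ∀ ε : ℝ, 0 < ε → PhiDefinedAt X ε

/-- The weak-fragmentability index `Φ(X) = sup_{ε > 0} Φ(X, ε)`. -/
noncomputable def Phi (X : Type*) [NormedAddCommGroup X] [NormedSpace ℝ X] : Ordinal.{0} :=
  ⨆ ε : {ε : ℝ // 0 < ε}, PhiEps X ε.1

section Aux

open Bornology Ordinal

variable {X : Type*} [NormedAddCommGroup X] [NormedSpace ℝ X]

lemma weakCont_clm (f : X →L[ℝ] ℝ) : @Continuous X ℝ (weakTop X) _ ⇑f := by
  rw [continuous_iff_le_induced]
  exact iInf_le _ f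

lemma weakCont_affine (c : ℝ) (z : X) :
    @Continuous X X (weakTop X) (weakTop X) (fun y : X => z + c • y) := by
  refine continuous_iInf_rng.mpr fun f => continuous_induced_rng.mpr ?_
  have h1 : ⇑f ∘ (fun y : X => z + c • y) = (fun r : ℝ => f z + c * r) ∘ ⇑f := by
    funext y
    simp [map_add, map_smul]
  rw [h1]
  have hg : Continuous (fun r : ℝ => f z + c * r) := by continuity
  exact @Continuous.comp X ℝ ℝ (weakTop X) _ _ _ _ hg (weakCont_clm f)

lemma isWeaklyOpen_preimage_affine (c : ℝ) (z : X) {V : Set X} (hV : IsWeaklyOpen V) :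
    IsWeaklyOpen ((fun y : X => z + c • y) ⁻¹' V) :=
  @Continuous.isOpen_preimage X X (weakTop X) (weakTop X) _ (weakCont_affine c z) V hV

lemma mem_dSet {ε : ℝ} {A : Set X} {x : X} :
    x ∈ dSet ε A ↔ x ∈ A ∧ ∀ V, IsWeaklyOpen V → x ∈ V → ¬ diam (V ∩ A) < ε := by
  simp only [dSet, mem_diff, mem_sUnion, mem_setOf_eq, not_exists]
  constructor
  · rintro ⟨h1, h2⟩
    exact ⟨h1, fun V hV hxV hd => h2 V ⟨⟨hV, hd⟩, hxV⟩⟩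
  · rintro ⟨h1, h2⟩
    exact ⟨h1, fun V hV => h2 V hV.1.1 hV.2 hV.1.2⟩

lemma dIter_zero (ε : ℝ) (K : Set X) : dIter ε K 0 = K :=
  Ordinal.limitRecOn_zero _ _ _

lemma dIter_succ (ε : ℝ) (K : Set X) (α : Ordinal) :
    dIter ε K (Order.succ α) = dSet ε (dIter ε K α) :=
  Ordinal.limitRecOn_succ _ _ _ _

lemma dIter_limit (ε : ℝ) (K : Set X) {α : Ordinal} (hα : Order.IsSuccLimit α) :
    dIter ε K α = ⋂ (β : Ordinal) (_ : β < α), dIter ε K β :=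
  Ordinal.limitRecOn_limit _ _ _ _ hα

lemma dIter_anti (ε : ℝ) (K : Set X) (α : Ordinal) :
    ∀ β ≤ α, dIter ε K α ⊆ dIter ε K β := by
  induction α using Ordinal.limitRecOn with
  | zero =>
    intro β hβ
    rw [nonpos_iff_eq_zero.1 hβ]
  | add_one α ih =>
    rw [Ordinal.add_one_eq_succ]
    intro β hβ
    rcases eq_or_lt_of_le hβ with rfl | hβ'
    · exact subset_rfl
    · have h1 : dIter ε K (Order.succ α) ⊆ dIter ε K α := by
        rw [dIter_succ]; exact diff_subset
      exact h1.trans (ih β (Order.lt_succ_iff.1 hβ'))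
  | limit α hα ih =>
    intro β hβ
    rcases eq_or_lt_of_le hβ with rfl | hβ'
    · exact subset_rfl
    · rw [dIter_limit ε K hα]
      exact iInter₂_subset β hβ'

lemma dIter_subset (ε : ℝ) (K : Set X) (α : Ordinal) : dIter ε K α ⊆ K := by
  have := dIter_anti ε K α 0 (zero_le (a := α))
  rwa [dIter_zero] at this

lemma dIter_mono {ε ε' : ℝ} (hεε' : ε ≤ ε') {K K' : Set X} (hK : K ⊆ K')
    (hb : Bornology.IsBounded K') (α : Ordinal) : dIter ε' K α ⊆ dIter ε K' α := by
  induction α using Ordinal.limitRecOn with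
  | zero => rw [dIter_zero, dIter_zero]; exact hK
  | add_one α ih =>
    rw [Ordinal.add_one_eq_succ]
    rw [dIter_succ, dIter_succ]
    intro x hx
    rw [mem_dSet] at hx ⊢
    refine ⟨ih hx.1, fun V hV hxV hd => hx.2 V hV hxV ?_⟩
    have h1 : diam (V ∩ dIter ε' K α) ≤ diam (V ∩ dIter ε K' α) :=
      diam_mono (inter_subset_inter subset_rfl ih)
        (hb.subset (inter_subset_right.trans (dIter_subset _ _ _)))
    exact lt_of_le_of_lt h1 (lt_of_lt_of_le hd hεε')
  | limit α hα ih =>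
    rw [dIter_limit _ _ hα, dIter_limit _ _ hα]
    exact fun x hx => mem_iInter₂.2 fun β hβ => ih β hβ (mem_iInter₂.1 hx β hβ)

lemma isBounded_affine_image (c : ℝ) (z : X) {K : Set X} (hK : Bornology.IsBounded K) :
    Bornology.IsBounded ((fun y : X => z + c • y) '' K) := by
  obtain ⟨C, hC⟩ := isBounded_iff_forall_norm_le.1 hK
  refine isBounded_iff_forall_norm_le.2 ⟨‖z‖ + |c| * C, ?_⟩
  rintro _ ⟨y, hy, rfl⟩
  have h1 : ‖c • y‖ = |c| * ‖y‖ := by rw [norm_smul, Real.norm_eq_abs]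
  have h2 : |c| * ‖y‖ ≤ |c| * C := by
    have := hC y hy
    nlinarith [abs_nonneg c]
  calc ‖z + c • y‖ ≤ ‖z‖ + ‖c • y‖ := norm_add_le _ _
    _ ≤ ‖z‖ + |c| * C := by rw [h1]; linarith

lemma diam_affine_image (c : ℝ) (z : X) (S : Set X) :
    diam ((fun y : X => z + c • y) '' S) = |c| * diam S := by
  have hiso : Isometry (fun w : X => z + w) :=
    Isometry.of_dist_eq fun a b => dist_add_left z a b
  rw [show (fun y : X => z + c • y) = (fun w : X => z + w) ∘ (fun y : X => c • y) from rfl,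
    Set.image_comp, Set.image_smul, hiso.diam_image, diam_smul₀, Real.norm_eq_abs]

lemma dIter_affine (ε : ℝ) (c : ℝ) (hc : c ≠ 0) (z : X) {K : Set X}
    (hK : Bornology.IsBounded K) (α : Ordinal) :
    ∀ x ∈ dIter ε K α,
      z + c • x ∈ dIter (|c| * ε) ((fun y : X => z + c • y) '' K) α := by
  induction α using Ordinal.limitRecOn with
  | zero =>
    intro x hx
    rw [dIter_zero] at hx ⊢
    exact ⟨x, hx, rfl⟩
  | add_one α ih =>
    rw [Ordinal.add_one_eq_succ]
    intro x hx
    rw [dIter_succ] at hx ⊢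
    rw [mem_dSet] at hx ⊢
    refine ⟨ih x hx.1, fun V hV hxV hd => ?_⟩
    refine hx.2 _ (isWeaklyOpen_preimage_affine c z hV) hxV ?_
    set A := dIter ε K α with hA
    set A' := dIter (|c| * ε) ((fun y : X => z + c • y) '' K) α with hA'
    have himg : (fun y : X => z + c • y) '' ((fun y : X => z + c • y) ⁻¹' V ∩ A) ⊆ V ∩ A' := by
      rintro _ ⟨y, ⟨hy1, hy2⟩, rfl⟩
      exact ⟨hy1, ih y hy2⟩
    have hbd : Bornology.IsBounded (V ∩ A') :=
      (isBounded_affine_image c z hK).subset (inter_subset_right.trans (dIter_subset _ _ _))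
    have hdiam : |c| * diam ((fun y : X => z + c • y) ⁻¹' V ∩ A) ≤ diam (V ∩ A') := by
      rw [← diam_affine_image c z]
      exact diam_mono himg hbd
    have hcpos : 0 < |c| := abs_pos.2 hc
    have := lt_of_le_of_lt hdiam hd
    exact (mul_lt_mul_iff_right₀ hcpos).1 this
  | limit α hα ih =>
    intro x hx
    rw [dIter_limit _ _ hα] at hx ⊢
    exact mem_iInter₂.2 fun β hβ => ih β hβ x (mem_iInter₂.1 hx β hβ)

lemma dIter_add (ε : ℝ) (K : Set X) (γ β : Ordinal) :
    dIter ε K (γ + β) = dIter ε (dIter ε K γ) β := by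
  induction β using Ordinal.limitRecOn with
  | zero => rw [add_zero, dIter_zero]
  | add_one β ih =>
    rw [Ordinal.add_one_eq_succ]
    rw [← Ordinal.add_one_eq_succ, ← add_assoc, Ordinal.add_one_eq_succ,
      Ordinal.add_one_eq_succ, dIter_succ, dIter_succ, ih]
  | limit β hβ ih =>
    rw [dIter_limit _ _ (Ordinal.isSuccLimit_add γ hβ), dIter_limit _ _ hβ]
    ext x
    simp only [mem_iInter]
    constructor
    · intro hx b hb
      rw [← ih b hb]
      exact hx (γ + b) ((add_lt_add_iff_left γ).2 hb)
    · intro hx d hd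
      rcases le_or_gt d γ with hdγ | hdγ
      · have h0 := hx 0 hβ.pos
        rw [← ih 0 hβ.pos, add_zero] at h0
        exact dIter_anti ε K γ d hdγ h0
      · have h1 : γ + (d - γ) = d := Ordinal.add_sub_cancel_of_le hdγ.le
        have hlt : d - γ < β := by
          rw [← h1, add_lt_add_iff_left] at hd
          exact hd
        have h2 := hx (d - γ) hlt
        rw [← ih _ hlt, h1] at h2
        exact h2

lemma lt_phiEps {ε : ℝ} (hdef : PhiDefinedAt X ε) {α : Ordinal}
    (hne : (dIter ε (closedBall (0 : X) 1) α).Nonempty) : α < PhiEps X ε := by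
  by_contra hle
  push_neg at hle
  rcases hne with ⟨x, hx⟩
  have hmem' : PhiEps X ε ∈ {γ : Ordinal.{0} | dIter ε (closedBall (0 : X) 1) γ = ∅} :=
    csInf_mem hdef
  have hmem : dIter ε (closedBall (0 : X) 1) (PhiEps X ε) = ∅ := hmem'
  have := dIter_anti ε (closedBall (0 : X) 1) α (PhiEps X ε) hle hx
  rw [hmem] at this
  exact this

end Aux

/-- **Proposition 2.2.** If the weak-fragmentability index of a Banach space `X` is well
defined, then it is of the form `ω^α` for some ordinal `α`. -/
theorem phi_eq_omega_opow (X : Type*) [NormedAddCommGroup X] [NormedSpace ℝ X]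
    [CompleteSpace X] (h : PhiDefined X) :
    ∃ a : Ordinal.{0}, Phi X = Ordinal.omega0 ^ a := by
  have hBne : ∀ ε : ℝ, (dIter ε (closedBall (0 : X) 1) 0).Nonempty := by
    intro ε
    rw [dIter_zero]
    exact ⟨0, mem_closedBall_self zero_le_one⟩
  have hBb : Bornology.IsBounded (closedBall (0 : X) 1) := isBounded_closedBall
  have hB2b : Bornology.IsBounded (closedBall (0 : X) 2) := isBounded_closedBall
  have hpos : (0 : Ordinal) < Phi X := by
    have h1 : (0 : Ordinal) < PhiEps X 1 := lt_phiEps (h 1 one_pos) (hBne 1)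
    exact h1.trans_le
      (Ordinal.le_iSup (fun ε : {ε : ℝ // 0 < ε} => PhiEps X ε.1) ⟨1, one_pos⟩)
  have hprin : Ordinal.Principal (· + ·) (Phi X) := by
    intro β γ hβ hγ
    have hβ' : β < ⨆ ε : {ε : ℝ // 0 < ε}, PhiEps X ε.1 := hβ
    have hγ' : γ < ⨆ ε : {ε : ℝ // 0 < ε}, PhiEps X ε.1 := hγ
    obtain ⟨ε₁, hβ1⟩ := Ordinal.lt_iSup_iff.1 hβ'
    obtain ⟨ε₂, hγ1⟩ := Ordinal.lt_iSup_iff.1 hγ'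
    set ε : ℝ := min ε₁.1 ε₂.1 with hεdef
    have hε0 : 0 < ε := lt_min ε₁.2 ε₂.2
    have key : ∀ (ζ : Ordinal) (η : ℝ), ζ < PhiEps X η → ε ≤ η →
        (dIter ε (closedBall (0 : X) 1) ζ).Nonempty := by
      intro ζ η hζ hεη
      have h1 : (dIter η (closedBall (0 : X) 1) ζ).Nonempty := by
        by_contra hemp
        rw [Set.not_nonempty_iff_eq_empty] at hemp
        have hζmem : ζ ∈ {γ : Ordinal.{0} | dIter η (closedBall (0 : X) 1) γ = ∅} := hemp
        exact absurd (csInf_le' hζmem) (not_le.2 hζ)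
      exact h1.mono (dIter_mono hεη subset_rfl hBb ζ)
    obtain ⟨x, hx⟩ := key β ε₁.1 hβ1 (min_le_left _ _)
    obtain ⟨y, hy⟩ := key γ ε₂.1 hγ1 (min_le_right _ _)
    -- Step 1: the ball x + B_X sits inside the β-th derived set of 2B_X.
    have hball : ∀ w ∈ closedBall (0 : X) 1, w + x ∈ dIter ε (closedBall (0 : X) 2) β := by
      intro w hw
      have h1 := dIter_affine ε 1 one_ne_zero w hBb β x hx
      simp only [one_smul, abs_one, one_mul] at h1
      refine dIter_mono le_rfl ?_ hB2b β h1
      rintro _ ⟨u, hu, rfl⟩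
      simp only [mem_closedBall, dist_zero_right] at hw hu ⊢
      calc ‖w + u‖ ≤ ‖w‖ + ‖u‖ := norm_add_le _ _
        _ ≤ 2 := by linarith
    -- Step 2: x + y survives β + γ derivations of 2B_X.
    have hxy : x + y ∈ dIter ε (closedBall (0 : X) 2) (β + γ) := by
      rw [dIter_add]
      have h2 := dIter_affine ε 1 one_ne_zero x hBb γ y hy
      simp only [one_smul, abs_one, one_mul] at h2
      refine dIter_mono le_rfl ?_ (hB2b.subset (dIter_subset _ _ _)) γ h2
      rintro _ ⟨u, hu, rfl⟩
      have := hball u hu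
      rwa [add_comm] at this
    -- Step 3: rescale by 1/2.
    set δ : ℝ := |(2⁻¹ : ℝ)| * ε with hδdef
    have hδ0 : 0 < δ := mul_pos (abs_pos.2 (by norm_num)) hε0
    have h3 := dIter_affine ε 2⁻¹ (by norm_num) 0 hB2b (β + γ) _ hxy
    have h4 : (0 : X) + (2⁻¹ : ℝ) • (x + y) ∈ dIter δ (closedBall (0 : X) 1) (β + γ) := by
      refine dIter_mono le_rfl ?_ hBb _ h3
      rintro _ ⟨u, hu, rfl⟩
      simp only [zero_add, mem_closedBall, dist_zero_right] at hu ⊢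
      rw [norm_smul]
      simp only [norm_inv, Real.norm_ofNat]
      nlinarith
    have h5 : β + γ < PhiEps X δ := lt_phiEps (h δ hδ0) ⟨_, h4⟩
    exact h5.trans_le
      (Ordinal.le_iSup (fun ε : {ε : ℝ // 0 < ε} => PhiEps X ε.1) ⟨δ, hδ0⟩)
  rcases Ordinal.principal_add_iff_zero_or_omega0_opow.1 hprin with h0 | ⟨a, ha⟩
  · exact absurd h0 hpos.ne'
  · exact ⟨a, ha.symm⟩

end
end
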